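/- Let X be a locally compact Hausdorff space, A a C*-algebra, C a closed linear subspace of A, and Y a closed subset of X. Then the closed linear span in C₀(X,A) of the functions x ↦ g(x)·c, where g ranges over the continuous complex-valued functions on X vanishing at infinity with g(Y) ⊆ {0} and c ranges over C, equals { f ∈ C₀(X,A) : f(y) = 0 for all y ∈ Y and f(x) ∈ C for all x ∈ X }. -/

import Mathlib

open scoped ZeroAtInfty
open Set Filter Function

/-- For a closed linear subspace `C ⊆ A` and a closed subset `Y ⊆ X`, the
closed linear span in `C₀(X, A)` of the functions `x ↦ g(x) • c` with `g ∈ C₀(X)` vanishing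
on `Y` and `c ∈ C` equals `{f ∈ C₀(X, A) : f(Y) = {0} and f(X) ⊆ C}`.
(Under the canonical isomorphism this identifies `J(Y) ⊗^min C`.) -/
theorem stmt2 {X A : Type*} [TopologicalSpace X] [LocallyCompactSpace X] [T2Space X]
    [NonUnitalNormedRing A] [StarRing A] [CStarRing A] [NormedSpace ℂ A]
    [IsScalarTower ℂ A A] [SMulCommClass ℂ A A] [StarModule ℂ A] [CompleteSpace A]
    (C : Submodule ℂ A) (hC : IsClosed (C : Set A))
    (Y : Set X) (hY : IsClosed Y) :
    closure (Submodule.span ℂ {f : C₀(X, A) | ∃ g : C₀(X, ℂ), ∃ c ∈ C,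
        (∀ y ∈ Y, g y = 0) ∧ ∀ x, f x = g x • c} : Set C₀(X, A)) =
      {f : C₀(X, A) | (∀ y ∈ Y, f y = 0) ∧ ∀ x, f x ∈ C} := by
  have hev : ∀ x : X, Continuous fun F : C₀(X, A) => F x := fun x =>
    (continuous_eval_const (F := BoundedContinuousFunction X A) x).comp
      ZeroAtInftyContinuousMap.isometry_toBCF.continuous
  apply le_antisymm
  · -- easy direction
    have hclosed : IsClosed {f : C₀(X, A) | (∀ y ∈ Y, f y = 0) ∧ ∀ x, f x ∈ C} := by
      have : {f : C₀(X, A) | (∀ y ∈ Y, f y = 0) ∧ ∀ x, f x ∈ C} =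
          (⋂ y ∈ Y, {F : C₀(X, A) | F y = 0}) ∩ ⋂ x, {F : C₀(X, A) | F x ∈ C} := by
        ext F; simp [Set.mem_iInter]
      rw [this]
      exact (isClosed_biInter fun y _ => isClosed_eq (hev y) continuous_const).inter
        (isClosed_iInter fun x => hC.preimage (hev x))
    refine closure_minimal ?_ hclosed
    intro F hF
    induction hF using Submodule.span_induction with
    | mem F hF =>
      obtain ⟨g, c, hc, hgY, hfg⟩ := hF
      exact ⟨fun y hy => by rw [hfg y, hgY y hy, zero_smul],
        fun x => by rw [hfg x]; exact C.smul_mem _ hc⟩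
    | zero => exact ⟨fun y _ => rfl, fun x => C.zero_mem⟩
    | add F G _ _ hF hG =>
      exact ⟨fun y hy => by
          simp only [ZeroAtInftyContinuousMap.add_apply, hF.1 y hy, hG.1 y hy, add_zero],
        fun x => by
          simpa only [ZeroAtInftyContinuousMap.add_apply] using C.add_mem (hF.2 x) (hG.2 x)⟩
    | smul a F _ hF =>
      exact ⟨fun y hy => by
          simp only [ZeroAtInftyContinuousMap.smul_apply, hF.1 y hy, smul_zero],
        fun x => by
          simpa only [ZeroAtInftyContinuousMap.smul_apply] using C.smul_mem a (hF.2 x)⟩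
  · -- hard direction
    rintro f ⟨hfY, hfC⟩
    rw [Metric.mem_closure_iff]
    intro ε hε
    set δ : ℝ := ε / 4 with hδdef
    have hδ : 0 < δ := by positivity
    -- the compact set where f is not small
    set K : Set X := {x | δ ≤ ‖f x‖} with hKdef
    have hKclosed : IsClosed K :=
      isClosed_le continuous_const (continuous_norm.comp (map_continuous f))
    have hKcompact : IsCompact K := by
      have h := Metric.tendsto_nhds.mp (zero_at_infty f) δ hδ
      obtain ⟨t, htc, hts⟩ := mem_cocompact.mp h
      refine htc.of_isClosed_subset hKclosed fun x hx => ?_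
      by_contra hxt
      have := hts hxt
      simp only [Set.mem_setOf_eq, dist_zero_right] at this
      exact absurd hx (by simpa [hKdef] using not_le.mpr this)
    -- the open cover
    set V : X → Set X := fun z => Yᶜ ∩ f ⁻¹' Metric.ball (f z) δ with hVdef
    have hVopen : ∀ z, IsOpen (V z) :=
      fun z => hY.isOpen_compl.inter (Metric.isOpen_ball.preimage (map_continuous f))
    have hmemV : ∀ z ∈ K, z ∈ V z := by
      intro z hz
      refine ⟨fun hzY => ?_, by simp [Metric.mem_ball]; exact hδ⟩
      rw [hKdef, Set.mem_setOf_eq, hfY z hzY, norm_zero] at hz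
      exact absurd hz (not_le.mpr hδ)
    obtain ⟨t, ht⟩ := hKcompact.elim_finite_subcover (fun i : K => V i.1)
      (fun i => hVopen i.1) (fun x hx => Set.mem_iUnion.mpr ⟨⟨x, hx⟩, hmemV x hx⟩)
    -- partition of unity
    obtain ⟨p, hsub, hcs⟩ :=
      PartitionOfUnity.exists_isSubordinate_of_locallyFinite_t2space (ι := ↥t) hKcompact
        (fun i => V i.1.1) (fun i => hVopen _) (locallyFinite_of_finite _)
        (by intro x hx
            obtain ⟨i, hi, hxi⟩ := Set.mem_iUnion₂.mp (ht hx)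
            exact Set.mem_iUnion.mpr ⟨⟨i, hi⟩, hxi⟩)
    -- the approximating functions
    have hsupp : ∀ (i : ↥t) (x : X), p i x ≠ 0 → x ∈ V i.1.1 := fun i x hx =>
      hsub i (subset_tsupport _ (Function.mem_support.mpr hx))
    set h : ↥t → C₀(X, A) := fun i =>
      ⟨⟨fun x => ((p i x : ℝ) : ℂ) • f i.1.1,
        (Complex.continuous_ofReal.comp (p i).continuous).smul continuous_const⟩,
        by
          refine HasCompactSupport.is_zero_at_infty ?_
          refine HasCompactSupport.mono (hcs i) ?_
          intro x hx
          simp only [Function.mem_support] at hx ⊢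
          intro h0
          exact hx (by rw [h0]; simp)⟩ with hhdef
    set F : C₀(X, A) := ∑ i, h i with hFdef
    have hFmem : F ∈ (Submodule.span ℂ {f : C₀(X, A) | ∃ g : C₀(X, ℂ), ∃ c ∈ C,
        (∀ y ∈ Y, g y = 0) ∧ ∀ x, f x = g x • c}) := by
      refine Submodule.sum_mem _ fun i _ => Submodule.subset_span ?_
      refine ⟨⟨⟨fun x => ((p i x : ℝ) : ℂ),
          Complex.continuous_ofReal.comp (p i).continuous⟩,
          HasCompactSupport.is_zero_at_infty
            (HasCompactSupport.mono (hcs i) (fun x hx => by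
              simp only [Function.mem_support] at hx ⊢
              exact fun h0 => hx (by rw [h0]; simp)))⟩,
        f i.1.1, hfC _, ?_, fun x => rfl⟩
      intro y hy
      simp only [ZeroAtInftyContinuousMap.coe_mk, ContinuousMap.coe_mk, Complex.ofReal_eq_zero]
      by_contra hne
      exact (hsupp i y hne).1 hy
    -- evaluation of sums
    have hFx : ∀ x : X, F x = ∑ i, ((p i x : ℝ) : ℂ) • f i.1.1 := fun x =>
      map_sum (⟨⟨fun F : C₀(X, A) => F x, rfl⟩, fun _ _ => rfl⟩ : C₀(X, A) →+ A)
        h Finset.univ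
    refine ⟨F, hFmem, ?_⟩
    rw [dist_eq_norm]
    have hbound : ∀ x : X, ‖f x - F x‖ ≤ 2 * δ := by
      intro x
      set S : ℝ := ∑ i, p i x with hSdef
      have hS1 : S ≤ 1 := by
        rw [hSdef, ← finsum_eq_sum_of_fintype]
        exact p.sum_le_one' x
      have hS0 : 0 ≤ S := Finset.sum_nonneg fun i _ => p.nonneg i x
      have key : f x - F x = (1 - (S : ℂ)) • f x
          + ∑ i, ((p i x : ℝ) : ℂ) • (f x - f i.1.1) := by
        have h1 : ∑ i, ((p i x : ℝ) : ℂ) • (f x - f i.1.1) = (S : ℂ) • f x - F x := by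
          rw [hFx x]
          simp only [smul_sub, Finset.sum_sub_distrib, ← Finset.sum_smul]
          congr 2
          push_cast [hSdef]
          rfl
        rw [h1, sub_smul, one_smul]
        abel
      rw [key]
      have hterm : ∀ i : ↥t, ‖((p i x : ℝ) : ℂ) • (f x - f i.1.1)‖ ≤ p i x * δ := by
        intro i
        rw [norm_smul, Complex.norm_real, Real.norm_eq_abs, abs_of_nonneg (p.nonneg i x)]
        rcases eq_or_ne (p i x) 0 with h0 | h0
        · simp [h0]
        · have hxV := (hsupp i x h0).2
          rw [Set.mem_preimage, Metric.mem_ball, dist_eq_norm] at hxV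
          exact mul_le_mul_of_nonneg_left hxV.le (p.nonneg i x)
      have h2 : ‖∑ i, ((p i x : ℝ) : ℂ) • (f x - f i.1.1)‖ ≤ δ := by
        calc ‖∑ i, ((p i x : ℝ) : ℂ) • (f x - f i.1.1)‖
            ≤ ∑ i, ‖((p i x : ℝ) : ℂ) • (f x - f i.1.1)‖ := norm_sum_le _ _
          _ ≤ ∑ i, p i x * δ := Finset.sum_le_sum fun i _ => hterm i
          _ = S * δ := by rw [← Finset.sum_mul]
          _ ≤ 1 * δ := mul_le_mul_of_nonneg_right hS1 hδ.le
          _ = δ := one_mul δ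
      have h3 : ‖(1 - (S : ℂ)) • f x‖ ≤ δ := by
        rw [norm_smul]
        by_cases hxK : x ∈ K
        · have : S = 1 := by
            rw [hSdef, ← finsum_eq_sum_of_fintype]
            exact p.sum_eq_one' x hxK
          simp [this]
          positivity
        · have hfx : ‖f x‖ < δ := not_le.mp hxK
          have habs : ‖(1 - (S : ℂ))‖ ≤ 1 := by
            have : ((1 : ℝ) : ℂ) - (S : ℂ) = ((1 - S : ℝ) : ℂ) := by push_cast; ring
            rw [show (1 : ℂ) - (S : ℂ) = ((1 - S : ℝ) : ℂ) by push_cast; ring,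
              Complex.norm_real, Real.norm_eq_abs, abs_of_nonneg (by linarith)]
            linarith
          calc ‖(1 : ℂ) - (S : ℂ)‖ * ‖f x‖ ≤ 1 * ‖f x‖ :=
                mul_le_mul_of_nonneg_right habs (norm_nonneg _)
            _ ≤ δ := by rw [one_mul]; exact hfx.le
      calc ‖(1 - (S : ℂ)) • f x + ∑ i, ((p i x : ℝ) : ℂ) • (f x - f i.1.1)‖
          ≤ ‖(1 - (S : ℂ)) • f x‖ + ‖∑ i, ((p i x : ℝ) : ℂ) • (f x - f i.1.1)‖ :=
            norm_add_le _ _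
        _ ≤ δ + δ := add_le_add h3 h2
        _ = 2 * δ := by ring
    have : ‖f - F‖ ≤ 2 * δ := by
      rw [← ZeroAtInftyContinuousMap.norm_toBCF_eq_norm]
      rw [BoundedContinuousFunction.norm_le (by positivity)]
      intro x
      exact hbound x
    calc ‖f - F‖ ≤ 2 * δ := this
      _ < ε := by rw [hδdef]; linarith
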